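/- Let E be a finite-dimensional real inner product space and let X and Y be nonempty compact convex subsets of E. Then the collection X ÷ Y equals the singleton collection {{0}} (i.e., a nonempty compact convex set Z belongs to X ÷ Y if and only if Z = {0}) if and only if X = Y. -/
import Mathlib


open Pointwise
open scoped RealInnerProductSpace

/-- The support function of a set `A ⊆ E`: `h_A(p) = sup_{a ∈ A} ⟪p, a⟫`. -/
noncomputable def supportFn {E : Type*} [NormedAddCommGroup E] [InnerProductSpace ℝ E]
    (A : Set E) (p : E) : ℝ :=
  sSup ((fun a => ⟪p, a⟫) '' A)

/-- `Z` is a member of the generalized Minkowski–Pontryagin difference `X ÷ Y`: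
`Z` is nonempty, compact, convex, `X ⊆ Y + Z`, and no nonempty compact convex
proper subset `Z' ⊊ Z` satisfies `X ⊆ Y + Z'`. -/
def MemGMPDiff {E : Type*} [NormedAddCommGroup E] [InnerProductSpace ℝ E]
    (X Y Z : Set E) : Prop :=
  Z.Nonempty ∧ IsCompact Z ∧ Convex ℝ Z ∧ X ⊆ Y + Z ∧
    ∀ Z' : Set E, Z'.Nonempty → IsCompact Z' → Convex ℝ Z' → Z' ⊂ Z → ¬ X ⊆ Y + Z'

/-- If `Y ⊆ Y + Z` with `Y` compact nonempty and `Z` compact convex, then `0 ∈ Z`. -/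
lemma zero_mem_of_subset_add {E : Type*} [NormedAddCommGroup E] [InnerProductSpace ℝ E]
    {Y Z : Set E} (hYne : Y.Nonempty) (hYc : IsCompact Y)
    (hZc : IsCompact Z) (hZconv : Convex ℝ Z) (h : Y ⊆ Y + Z) : (0 : E) ∈ Z := by
  by_contra h0
  obtain ⟨f, u, hfu, hu0⟩ := geometric_hahn_banach_closed_point hZconv hZc.isClosed h0
  simp only [map_zero] at hu0
  obtain ⟨x, hxY, hmax⟩ := hYc.exists_isMaxOn hYne f.continuous.continuousOn
  obtain ⟨y, hy, z, hz, hyz⟩ := h hxY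
  have h1 : f y ≤ f x := hmax hy
  have h2 : f z < u := hfu z hz
  have h3 : f x = f y + f z := by rw [← hyz]; simp
  linarith

/-- Any feasible compact convex set contains a minimal one (Zorn). -/
lemma exists_minimal_mem {E : Type*} [NormedAddCommGroup E] [InnerProductSpace ℝ E]
    (X Y : Set E) (hYc : IsCompact Y)
    {W : Set E} (hWne : W.Nonempty) (hWc : IsCompact W) (hWconv : Convex ℝ W)
    (hXW : X ⊆ Y + W) : ∃ Z, MemGMPDiff X Y Z ∧ Z ⊆ W := by
  set S : Set (Set E) := {Z | Z.Nonempty ∧ IsCompact Z ∧ Convex ℝ Z ∧ X ⊆ Y + Z} with hS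
  have key : ∀ c ⊆ S, IsChain (· ⊆ ·) c → c.Nonempty → ∃ lb ∈ S, ∀ s ∈ c, lb ⊆ s := by
    intro c hcS hchain hcne
    haveI : Nonempty c := hcne.to_subtype
    have hdir : Directed (· ⊇ ·) (fun Z : c => (Z : Set E)) := by
      rintro ⟨Z₁, hZ₁⟩ ⟨Z₂, hZ₂⟩
      rcases hchain.total hZ₁ hZ₂ with h | h
      · exact ⟨⟨Z₁, hZ₁⟩, le_refl _, h⟩
      · exact ⟨⟨Z₂, hZ₂⟩, h, le_refl _⟩
    have hsub : ∀ Z : c, X ⊆ Y + (Z : Set E) := fun Z => (hcS Z.2).2.2.2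
    have hcomp : ∀ Z : c, IsCompact (Z : Set E) := fun Z => (hcS Z.2).2.1
    have hne : ∀ Z : c, (Z : Set E).Nonempty := fun Z => (hcS Z.2).1
    have hInter_eq : ⋂₀ c = ⋂ Z : c, (Z : Set E) := Set.sInter_eq_iInter
    have hclosed : IsClosed (⋂₀ c) :=
      isClosed_sInter (fun Z hZ => ((hcS hZ).2.1).isClosed)
    refine ⟨⋂₀ c, ⟨?_, ?_, ?_, ?_⟩, fun s hs => Set.sInter_subset_of_mem hs⟩
    · rw [hInter_eq]
      exact IsCompact.nonempty_iInter_of_directed_nonempty_isCompact_isClosed _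
        hdir hne hcomp (fun Z => (hcomp Z).isClosed)
    · obtain ⟨Z₀, hZ₀⟩ := hcne
      exact IsCompact.of_isClosed_subset ((hcS hZ₀).2.1) hclosed
        (Set.sInter_subset_of_mem hZ₀)
    · exact convex_sInter (fun Z hZ => (hcS hZ).2.2.1)
    · intro x hx
      set F : c → Set E := fun Z => (Z : Set E) ∩ (fun z => x - z) ⁻¹' Y with hF
      have hYclosed : IsClosed Y := hYc.isClosed
      have hpre : IsClosed ((fun z : E => x - z) ⁻¹' Y) :=
        hYclosed.preimage (continuous_const.sub continuous_id)
      have hFne : ∀ Z : c, (F Z).Nonempty := by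
        intro Z
        obtain ⟨y, hy, z, hz, hyz⟩ := hsub Z hx
        exact ⟨z, hz, by simp only [Set.mem_preimage, ← hyz]; simpa using hy⟩
      have hFc : ∀ Z : c, IsCompact (F Z) := fun Z => (hcomp Z).inter_right hpre
      have hFcl : ∀ Z : c, IsClosed (F Z) := fun Z => ((hcomp Z).isClosed).inter hpre
      have hFdir : Directed (· ⊇ ·) F := by
        intro Z₁ Z₂
        obtain ⟨Z₃, h₁, h₂⟩ := hdir Z₁ Z₂
        exact ⟨Z₃, Set.inter_subset_inter_left _ h₁, Set.inter_subset_inter_left _ h₂⟩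
      obtain ⟨z, hz⟩ :=
        IsCompact.nonempty_iInter_of_directed_nonempty_isCompact_isClosed F hFdir hFne hFc hFcl
      simp only [Set.mem_iInter] at hz
      have hzInter : z ∈ ⋂₀ c := by
        rw [hInter_eq, Set.mem_iInter]
        exact fun Z => (hz Z).1
      have hxz : x - z ∈ Y := by
        obtain ⟨Z₀, hZ₀⟩ := hcne
        exact (hz ⟨Z₀, hZ₀⟩).2
      exact ⟨x - z, hxz, z, hzInter, by simp⟩
  obtain ⟨m, hmW, hmS, hmin⟩ := zorn_superset_nonempty S key W ⟨hWne, hWc, hWconv, hXW⟩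
  obtain ⟨hmne, hmc, hmconv, hmsub⟩ := hmS
  refine ⟨m, ⟨hmne, hmc, hmconv, hmsub, ?_⟩, hmW⟩
  intro Z' hZ'ne hZ'c hZ'conv hss hsubX
  have := hmin (y := Z') ⟨hZ'ne, hZ'c, hZ'conv, hsubX⟩ hss.subset
  exact hss.ne.symm (le_antisymm this hss.subset)

theorem gmpDiff_invertability
    {E : Type*} [NormedAddCommGroup E] [InnerProductSpace ℝ E] [FiniteDimensional ℝ E]
    (X Y : Set E)
    (hXne : X.Nonempty) (hXc : IsCompact X) (hXconv : Convex ℝ X)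
    (hYne : Y.Nonempty) (hYc : IsCompact Y) (hYconv : Convex ℝ Y) :
    {Z : Set E | MemGMPDiff X Y Z} = {({0} : Set E)} ↔ X = Y := by
  have hY0 : Y + ({0} : Set E) = Y := by simp
  constructor
  · intro h
    have h0mem : MemGMPDiff X Y ({0} : Set E) := by
      have : ({0} : Set E) ∈ {Z : Set E | MemGMPDiff X Y Z} := by rw [h]; rfl
      exact this
    have hXY : X ⊆ Y := by
      have := h0mem.2.2.2.1
      rwa [hY0] at this
    have hYX : Y ⊆ X := by
      by_contra hns
      obtain ⟨y₀, hy₀Y, hy₀X⟩ := Set.not_subset.mp hns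
      set W : Set E := (fun x => -y₀ + x) '' X with hWdef
      have hWne : W.Nonempty := hXne.image _
      have hWc : IsCompact W := hXc.image (continuous_const.add continuous_id)
      have hWconv : Convex ℝ W := hXconv.translate (-y₀)
      have hXW : X ⊆ Y + W := by
        intro x hx
        have : y₀ + (-y₀ + x) ∈ Y + W := Set.add_mem_add hy₀Y ⟨x, hx, rfl⟩
        simpa using this
      obtain ⟨m, hm, hmW⟩ := exists_minimal_mem X Y hYc hWne hWc hWconv hXW
      have hm0 : m = ({0} : Set E) := by
        have : m ∈ ({({0} : Set E)} : Set (Set E)) := h ▸ hm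
        simpa using this
      have h0W : (0 : E) ∈ W := hmW (by rw [hm0]; rfl)
      obtain ⟨x, hx, hx0⟩ := h0W
      have hxy : x = y₀ := (neg_add_eq_zero.mp hx0).symm
      exact hy₀X (hxy ▸ hx)
    exact Set.Subset.antisymm hXY hYX
  · intro h
    subst h
    ext Z
    simp only [Set.mem_setOf_eq, Set.mem_singleton_iff]
    constructor
    · rintro ⟨hZne, hZc, hZconv, hsub, hmin⟩
      have h0Z : (0 : E) ∈ Z := zero_mem_of_subset_add hXne hXc hZc hZconv hsub
      by_contra hne
      have hss : ({0} : Set E) ⊂ Z :=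
        ⟨Set.singleton_subset_iff.mpr h0Z, fun hZ0 => hne (le_antisymm hZ0 (Set.singleton_subset_iff.mpr h0Z))⟩
      exact hmin {0} (Set.singleton_nonempty 0) isCompact_singleton (convex_singleton 0) hss
        (by rw [hY0])
    · rintro rfl
      refine ⟨Set.singleton_nonempty 0, isCompact_singleton, convex_singleton 0, by rw [hY0], ?_⟩
      intro Z' hZ'ne hZ'c hZ'conv hss _
      have := hss.subset
      have hZ'eq : Z' = ({0} : Set E) := (Set.subset_singleton_iff_eq.mp this).resolve_left
        (Set.nonempty_iff_ne_empty.mp hZ'ne)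
      exact hss.ne hZ'eq
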